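/- Let x₀ ∈ ℝⁿ be k-sparse with support S, f = ℓ₁-norm, and λ ≥ 0. Let h ∈ ℝⁿ have i.i.d. N(0,1) entries. Then the Gaussian squared distance δ(λ∂‖x₀‖₁) := E[dist²(h, λ∂‖x₀‖₁)] equals k(1+λ²) + (n−k)[(1+λ²)erfc(λ/√2) − √(2/π)λexp(−λ²/2)]. -/

import Mathlib

open MeasureTheory ProbabilityTheory Real Set Filter
open scoped Pointwise ENNReal NNReal

noncomputable def erfc (x : ℝ) : ℝ :=
  (2 / Real.sqrt π) * ∫ u in Set.Ioi x, Real.exp (-u ^ 2)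

namespace GaussAux

noncomputable def phi (x : ℝ) : ℝ := Real.exp (-(1/2) * x ^ 2)

lemma phi_eq (x : ℝ) : phi x = Real.exp (-x ^ 2 / 2) := by unfold phi; ring_nf

lemma phi_pos (x : ℝ) : 0 < phi x := Real.exp_pos _

lemma continuous_phi : Continuous phi := by
  unfold phi; fun_prop

lemma integrable_phi : Integrable phi :=
  integrable_exp_neg_mul_sq (by norm_num)

lemma integrable_x_phi : Integrable (fun x => x * phi x) :=
  integrable_mul_exp_neg_mul_sq (by norm_num)

lemma integrable_sq_phi : Integrable (fun x => x ^ 2 * phi x) := by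
  have h := integrable_rpow_mul_exp_neg_mul_sq (b := 1/2) (by norm_num) (s := 2) (by norm_num)
  refine h.congr (Filter.Eventually.of_forall fun x => ?_)
  simp only [Real.rpow_two]
  rfl

lemma integrable_sub_phi : Integrable (fun x => (x ^ 2 - 1) * phi x) := by
  refine (integrable_sq_phi.sub integrable_phi).congr (Filter.Eventually.of_forall fun x => ?_)
  simp only [Pi.sub_apply]
  ring

lemma integral_phi : ∫ x, phi x = Real.sqrt (2 * π) := by
  unfold phi
  rw [integral_gaussian]
  congr 1
  ring

lemma tendsto_phi_atTop : Tendsto phi atTop (nhds 0) := by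
  have h1 : Tendsto (fun x : ℝ => (1/2) * x ^ 2) atTop atTop :=
    Tendsto.const_mul_atTop (by norm_num) (tendsto_pow_atTop (by norm_num))
  have h2 := tendsto_exp_neg_atTop_nhds_zero.comp h1
  exact h2.congr fun x => by simp [Function.comp, phi, neg_mul]

lemma tendsto_x_phi_atTop : Tendsto (fun x => x * phi x) atTop (nhds 0) := by
  have h := tendsto_rpow_abs_mul_exp_neg_mul_sq_cocompact (a := 1/2) (by norm_num) 1
  have h2 : Tendsto (fun x : ℝ => |x| ^ (1:ℝ) * Real.exp (-(1/2) * x ^ 2)) atTop (nhds 0) := by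
    refine h.mono_left ?_
    rw [cocompact_eq_atBot_atTop]
    exact le_sup_right
  refine h2.congr' ?_
  filter_upwards [eventually_ge_atTop (0:ℝ)] with x hx
  rw [Real.rpow_one, abs_of_nonneg hx]
  rfl

lemma tendsto_x_phi_atBot : Tendsto (fun x => x * phi x) atBot (nhds 0) := by
  have h := tendsto_rpow_abs_mul_exp_neg_mul_sq_cocompact (a := 1/2) (by norm_num) 1
  have h2 : Tendsto (fun x : ℝ => |x| ^ (1:ℝ) * Real.exp (-(1/2) * x ^ 2)) atBot (nhds 0) := by
    refine h.mono_left ?_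
    rw [cocompact_eq_atBot_atTop]
    exact le_sup_left
  have h3 : Tendsto (fun x : ℝ => -(x * phi x)) atBot (nhds 0) := by
    refine h2.congr' ?_
    filter_upwards [eventually_le_atBot (0:ℝ)] with x hx
    rw [Real.rpow_one, abs_of_nonpos hx]
    unfold phi
    ring
  have := h3.neg
  simpa using this

lemma hasDerivAt_neg_phi (x : ℝ) : HasDerivAt (fun y => -phi y) (x * phi x) x := by
  have h : HasDerivAt (fun y : ℝ => -(1/2) * y ^ 2) (-(1/2) * (2 * x)) x := by
    simpa using ((hasDerivAt_pow 2 x).const_mul (-(1/2) : ℝ))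
  have := (h.exp).fun_neg
  rw [show x * phi x = -(Real.exp (-(1/2) * x ^ 2) * (-(1/2) * (2 * x))) by unfold phi; ring]
  exact this

lemma hasDerivAt_neg_x_phi (x : ℝ) :
    HasDerivAt (fun y => -(y * phi y)) ((x ^ 2 - 1) * phi x) x := by
  have hphi : HasDerivAt phi (-(x * phi x)) x := by
    have := (hasDerivAt_neg_phi x).fun_neg
    simpa using this
  have := ((hasDerivAt_id x).fun_mul hphi).fun_neg
  rw [show (x ^ 2 - 1) * phi x = -(1 * phi x + x * -(x * phi x)) by ring]
  exact this

noncomputable def I0 (l : ℝ) : ℝ := ∫ x in Set.Ioi l, phi x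

lemma I0_nonneg (l : ℝ) : 0 ≤ I0 l :=
  integral_nonneg fun x => (phi_pos x).le

lemma integral_Ioi_x_phi (l : ℝ) : ∫ x in Set.Ioi l, x * phi x = phi l := by
  have := integral_Ioi_of_hasDerivAt_of_tendsto' (f := fun y => -phi y)
    (f' := fun x => x * phi x) (a := l)
    (fun x _ => hasDerivAt_neg_phi x) integrable_x_phi.integrableOn
    (by simpa using tendsto_phi_atTop.neg)
  simpa using this

lemma integral_Ioi_sq_phi (l : ℝ) :
    ∫ x in Set.Ioi l, x ^ 2 * phi x = l * phi l + I0 l := by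
  have key := integral_Ioi_of_hasDerivAt_of_tendsto' (f := fun y => -(y * phi y))
    (f' := fun x => (x ^ 2 - 1) * phi x) (a := l)
    (fun x _ => hasDerivAt_neg_x_phi x)
    integrable_sub_phi.integrableOn
    (by simpa using tendsto_x_phi_atTop.neg)
  simp only [zero_sub, neg_neg] at key
  have hsplit : ∫ x in Set.Ioi l, (x ^ 2 - 1) * phi x
      = (∫ x in Set.Ioi l, x ^ 2 * phi x) - ∫ x in Set.Ioi l, phi x := by
    rw [← integral_sub integrable_sq_phi.integrableOn integrable_phi.integrableOn]
    congr 1 with x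
    ring
  rw [hsplit] at key
  unfold I0
  linarith

lemma integral_x_phi : ∫ x, x * phi x = 0 := by
  have h := integral_neg_eq_self (fun x => x * phi x) (volume : Measure ℝ)
  have heq : ∀ x : ℝ, -x * phi (-x) = -(x * phi x) := by
    intro x; unfold phi; ring_nf
  simp only [heq, integral_neg] at h
  linarith

lemma integral_sq_phi : ∫ x, x ^ 2 * phi x = Real.sqrt (2 * π) := by
  have key := MeasureTheory.integral_of_hasDerivAt_of_tendsto (f := fun y => -(y * phi y))
    (f' := fun x => (x ^ 2 - 1) * phi x)
    (fun x => hasDerivAt_neg_x_phi x)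
    integrable_sub_phi
    (by simpa using tendsto_x_phi_atBot.neg)
    (by simpa using tendsto_x_phi_atTop.neg)
  simp only [sub_self] at key
  have hsplit : ∫ x, (x ^ 2 - 1) * phi x
      = (∫ x, x ^ 2 * phi x) - ∫ x, phi x := by
    rw [← integral_sub integrable_sq_phi integrable_phi]
    congr 1 with x
    ring
  rw [hsplit, integral_phi] at key
  linarith

lemma erfc_eq (l : ℝ) : erfc (l / Real.sqrt 2) = Real.sqrt (2 / π) * I0 l := by
  have h2 : (0:ℝ) < Real.sqrt 2 := by positivity
  have hπ : (0:ℝ) < Real.sqrt π := Real.sqrt_pos.mpr Real.pi_pos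
  have key : ∀ u : ℝ, Real.exp (-u ^ 2) = phi (Real.sqrt 2 * u) := by
    intro u
    unfold phi
    congr 1
    rw [mul_pow, Real.sq_sqrt (by norm_num : (0:ℝ) ≤ 2)]
    ring
  unfold erfc
  simp only [key]
  rw [integral_comp_mul_left_Ioi phi _ h2]
  rw [mul_div_cancel₀ _ h2.ne']
  rw [smul_eq_mul]
  show 2 / Real.sqrt π * ((Real.sqrt 2)⁻¹ * I0 l) = _
  rw [Real.sqrt_div (by norm_num : (0:ℝ) ≤ 2)]
  have h22 : Real.sqrt 2 * Real.sqrt 2 = 2 := Real.mul_self_sqrt (by norm_num)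
  field_simp
  linear_combination (-(I0 l)) * h22

/-! Gaussian measure integrals -/

lemma sqrt2pi_pos : (0:ℝ) < Real.sqrt (2 * π) := by positivity

lemma gaussianPDFReal_eq (x : ℝ) :
    gaussianPDFReal 0 1 x = (Real.sqrt (2 * π))⁻¹ * phi x := by
  rw [gaussianPDFReal, phi_eq]
  norm_num

lemma measurable_pdf_nnreal : Measurable fun x => (gaussianPDFReal 0 1 x).toNNReal :=
  (measurable_gaussianPDFReal 0 1).real_toNNReal

lemma gaussianPDF_eq_coe :
    gaussianPDF 0 1 = fun x => ((gaussianPDFReal 0 1 x).toNNReal : ℝ≥0∞) := rfl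

lemma coe_pdf (x : ℝ) :
    ((gaussianPDFReal 0 1 x).toNNReal : ℝ) = (Real.sqrt (2 * π))⁻¹ * phi x := by
  rw [Real.coe_toNNReal _ (gaussianPDFReal_nonneg 0 1 x), gaussianPDFReal_eq]

lemma integral_gauss (f : ℝ → ℝ) :
    ∫ x, f x ∂(gaussianReal 0 1)
      = (Real.sqrt (2 * π))⁻¹ * ∫ x, f x * phi x := by
  rw [gaussianReal_of_var_ne_zero 0 one_ne_zero, gaussianPDF_eq_coe,
    integral_withDensity_eq_integral_smul measurable_pdf_nnreal]
  rw [← integral_const_mul]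
  refine integral_congr_ae (Filter.Eventually.of_forall fun x => ?_)
  simp only [NNReal.smul_def, smul_eq_mul, coe_pdf]
  ring

lemma integrable_gauss_of {f : ℝ → ℝ} (h : Integrable (fun x => f x * phi x)) :
    Integrable f (gaussianReal 0 1) := by
  rw [gaussianReal_of_var_ne_zero 0 one_ne_zero, gaussianPDF_eq_coe,
    integrable_withDensity_iff_integrable_smul measurable_pdf_nnreal]
  refine (h.const_mul ((Real.sqrt (2 * π))⁻¹)).congr
    (Filter.Eventually.of_forall fun x => ?_)
  simp only [NNReal.smul_def, smul_eq_mul, coe_pdf]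
  ring

lemma integrable_comb (c : ℝ) :
    Integrable (fun x => x ^ 2 * phi x - 2 * c * (x * phi x)) := by
  have := integrable_sq_phi.sub (integrable_x_phi.const_mul (2 * c))
  exact this

lemma integrable_sq_sub_phi (c : ℝ) : Integrable (fun x => (x - c) ^ 2 * phi x) := by
  refine ((integrable_comb c).add (integrable_phi.const_mul (c ^ 2))).congr
    (Filter.Eventually.of_forall fun x => ?_)
  simp only [Pi.add_apply, Pi.sub_apply]
  ring

lemma integrable_sq_gauss (c : ℝ) :
    Integrable (fun x => (x - c) ^ 2) (gaussianReal 0 1) :=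
  integrable_gauss_of (integrable_sq_sub_phi c)

lemma gauss_sq (c : ℝ) :
    ∫ x, (x - c) ^ 2 ∂(gaussianReal 0 1) = 1 + c ^ 2 := by
  rw [integral_gauss]
  have hexp : ∀ x : ℝ, (x - c) ^ 2 * phi x
      = x ^ 2 * phi x - (2 * c) * (x * phi x) + c ^ 2 * phi x := fun x => by ring
  have : ∫ x, (x - c) ^ 2 * phi x
      = (∫ x, x ^ 2 * phi x) - (2 * c) * (∫ x, x * phi x) + c ^ 2 * ∫ x, phi x := by
    simp only [hexp]
    rw [integral_add (integrable_comb c) (integrable_phi.const_mul (c ^ 2)),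
      integral_sub integrable_sq_phi (integrable_x_phi.const_mul (2*c)),
      integral_const_mul, integral_const_mul]
  rw [this, integral_sq_phi, integral_x_phi, integral_phi]
  field_simp
  ring

/-! the clamp integral -/

lemma m_nonneg (l x : ℝ) : 0 ≤ max (|x| - l) 0 ^ 2 := sq_nonneg _

lemma continuous_m (l : ℝ) : Continuous fun x : ℝ => max (|x| - l) 0 ^ 2 := by
  fun_prop

lemma integrable_m_phi {l : ℝ} (hl : 0 ≤ l) :
    Integrable (fun x => max (|x| - l) 0 ^ 2 * phi x) := by
  refine integrable_sq_phi.mono' (((continuous_m l).mul continuous_phi).aestronglyMeasurable)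
    (Filter.Eventually.of_forall fun x => ?_)
  have h1 : 0 ≤ max (|x| - l) 0 ^ 2 * phi x :=
    mul_nonneg (m_nonneg l x) (phi_pos x).le
  rw [Real.norm_eq_abs, abs_of_nonneg h1]
  have h2 : max (|x| - l) 0 ≤ |x| := by
    apply max_le _ (abs_nonneg x)
    linarith
  have h3 : max (|x| - l) 0 ^ 2 ≤ x ^ 2 := by
    rw [← sq_abs x]
    exact pow_le_pow_left₀ (le_max_right _ 0) h2 2
  exact mul_le_mul_of_nonneg_right h3 (phi_pos x).le

lemma integrable_m_gauss {l : ℝ} (hl : 0 ≤ l) :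
    Integrable (fun x => max (|x| - l) 0 ^ 2) (gaussianReal 0 1) :=
  integrable_gauss_of (integrable_m_phi hl)

lemma integral_Ioi_sq_sub_phi {l : ℝ} :
    ∫ x in Set.Ioi l, (x - l) ^ 2 * phi x = (1 + l ^ 2) * I0 l - l * phi l := by
  have hexp : ∀ x : ℝ, (x - l) ^ 2 * phi x
      = x ^ 2 * phi x - (2 * l) * (x * phi x) + l ^ 2 * phi x := fun x => by ring
  have : ∫ x in Set.Ioi l, (x - l) ^ 2 * phi x
      = (∫ x in Set.Ioi l, x ^ 2 * phi x) - (2 * l) * (∫ x in Set.Ioi l, x * phi x)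
        + l ^ 2 * ∫ x in Set.Ioi l, phi x := by
    simp only [hexp]
    rw [integral_add ((integrable_comb l).integrableOn)
        ((integrable_phi.const_mul (l ^ 2)).integrableOn),
      integral_sub integrable_sq_phi.integrableOn ((integrable_x_phi.const_mul (2*l)).integrableOn),
      integral_const_mul, integral_const_mul]
  rw [this, integral_Ioi_sq_phi, integral_Ioi_x_phi]
  unfold I0
  ring

lemma integral_m_phi {l : ℝ} (hl : 0 ≤ l) :
    ∫ x, max (|x| - l) 0 ^ 2 * phi x = 2 * ((1 + l ^ 2) * I0 l - l * phi l) := by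
  set g : ℝ → ℝ := fun x => max (|x| - l) 0 ^ 2 * phi x with hg
  have hint := integrable_m_phi hl
  have heven : ∀ x, g (-x) = g x := by
    intro x
    simp only [hg, abs_neg]
    congr 1
    unfold phi
    ring_nf
  have hIic : ∫ x in Set.Iic (0:ℝ), g x = ∫ x in Set.Ioi (0:ℝ), g x := by
    have h := integral_comp_neg_Ioi (0:ℝ) g
    simp only [heven, neg_zero] at h
    exact h.symm
  have hsplit : (∫ x in Set.Iic (0:ℝ), g x) + ∫ x in Set.Ioi (0:ℝ), g x = ∫ x, g x :=
    intervalIntegral.integral_Iic_add_Ioi hint.integrableOn hint.integrableOn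
  have hIoi : ∫ x in Set.Ioi (0:ℝ), g x = ∫ x in Set.Ioi l, (x - l) ^ 2 * phi x := by
    rw [← Set.Ioc_union_Ioi_eq_Ioi hl,
      setIntegral_union (Set.Ioc_disjoint_Ioi le_rfl) measurableSet_Ioi
        hint.integrableOn hint.integrableOn]
    have h0 : ∫ x in Set.Ioc (0:ℝ) l, g x = 0 := by
      rw [setIntegral_congr_fun measurableSet_Ioc
        (g := fun _ => (0:ℝ)) ?_]
      · simp
      · intro x hx
        have hx1 : |x| ≤ l := by
          rw [abs_of_pos hx.1]
          exact hx.2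
        simp only [hg]
        have : max (|x| - l) 0 = 0 := max_eq_right (by linarith)
        rw [this]
        ring
    have h1 : ∫ x in Set.Ioi l, g x = ∫ x in Set.Ioi l, (x - l) ^ 2 * phi x := by
      refine setIntegral_congr_fun measurableSet_Ioi fun x hx => ?_
      have hxl : l < x := hx
      have hx0 : 0 ≤ x := le_trans hl hxl.le
      simp only [hg, abs_of_nonneg hx0]
      congr 2
      exact max_eq_left (by linarith)
    rw [h0, h1, zero_add]
  rw [← hsplit, hIic, hIoi, integral_Ioi_sq_sub_phi]
  ring

lemma two_inv_sqrt2pi : (Real.sqrt (2 * π))⁻¹ * 2 = Real.sqrt (2 / π) := by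
  have h22 : Real.sqrt 2 * Real.sqrt 2 = 2 := Real.mul_self_sqrt (by norm_num)
  have hπ : (0:ℝ) < Real.sqrt π := Real.sqrt_pos.mpr Real.pi_pos
  have h2 : (0:ℝ) < Real.sqrt 2 := by positivity
  rw [Real.sqrt_mul (by norm_num : (0:ℝ) ≤ 2), Real.sqrt_div (by norm_num : (0:ℝ) ≤ 2)]
  field_simp
  linear_combination (-1 : ℝ) * h22

lemma gauss_clamp {l : ℝ} (hl : 0 ≤ l) :
    ∫ x, max (|x| - l) 0 ^ 2 ∂(gaussianReal 0 1)
      = (1 + l ^ 2) * erfc (l / Real.sqrt 2)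
        - Real.sqrt (2 / π) * l * Real.exp (-l ^ 2 / 2) := by
  rw [integral_gauss, integral_m_phi hl, erfc_eq, ← phi_eq]
  have h := two_inv_sqrt2pi
  calc (Real.sqrt (2 * π))⁻¹ * (2 * ((1 + l ^ 2) * I0 l - l * phi l))
      = ((Real.sqrt (2 * π))⁻¹ * 2) * ((1 + l ^ 2) * I0 l - l * phi l) := by ring
    _ = Real.sqrt (2 / π) * ((1 + l ^ 2) * I0 l - l * phi l) := by rw [h]
    _ = (1 + l ^ 2) * (Real.sqrt (2 / π) * I0 l) - Real.sqrt (2 / π) * l * phi l := by ring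

end GaussAux

/-! Geometry: distance to the scaled subdifferential -/

lemma clamp_sq {l x : ℝ} (hl : 0 ≤ l) :
    (x - min (max x (-l)) l) ^ 2 = max (|x| - l) 0 ^ 2 := by
  rcases le_total x (-l) with h | h
  · rw [max_eq_right h, min_eq_left (by linarith), abs_of_nonpos (by linarith),
      max_eq_left (by linarith)]
    ring
  · rcases le_total l x with h2 | h2
    · rw [max_eq_left (by linarith), min_eq_right h2, abs_of_nonneg (by linarith),
        max_eq_left (by linarith)]
    · have habs : |x| ≤ l := abs_le.mpr ⟨by linarith, h2⟩
      rw [max_eq_left (by linarith), min_eq_left h2, max_eq_right (by linarith)]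
      ring

lemma clamp_abs_le {l x : ℝ} (hl : 0 ≤ l) : |min (max x (-l)) l| ≤ l := by
  rw [abs_le]
  constructor
  · exact le_min (le_max_right _ _) (by linarith)
  · exact min_le_right _ _

lemma sq_clamp_le {l x t : ℝ} (ht : |t| ≤ l) :
    max (|x| - l) 0 ^ 2 ≤ (x - t) ^ 2 := by
  have h1 : max (|x| - l) 0 ≤ |x - t| := by
    refine max_le ?_ (abs_nonneg _)
    have h2 := abs_sub_abs_le_abs_sub x t
    linarith
  calc max (|x| - l) 0 ^ 2 ≤ |x - t| ^ 2 :=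
        pow_le_pow_left₀ (le_max_right _ 0) h1 2
    _ = (x - t) ^ 2 := sq_abs _

lemma abs_sign_le (x : ℝ) : |Real.sign x| ≤ 1 := by
  rcases lt_trichotomy x 0 with h | h | h
  · rw [Real.sign_of_neg h]; norm_num
  · rw [h, Real.sign_zero]; norm_num
  · rw [Real.sign_of_pos h]; norm_num

lemma sign_sq_of_ne (x : ℝ) (h : x ≠ 0) : Real.sign x ^ 2 = 1 := by
  rcases lt_trichotomy x 0 with h1 | h1 | h1
  · rw [Real.sign_of_neg h1]; norm_num
  · exact absurd h1 h
  · rw [Real.sign_of_pos h1]; norm_num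

variable {n : ℕ}

def Dset (x₀ : EuclideanSpace ℝ (Fin n)) : Set (EuclideanSpace ℝ (Fin n)) :=
  {s | (∀ i, |s i| ≤ 1) ∧ ∀ i, x₀ i ≠ 0 → s i = Real.sign (x₀ i)}

lemma mem_smul_D {x₀ : EuclideanSpace ℝ (Fin n)} {l : ℝ} (hl : 0 ≤ l)
    (t : EuclideanSpace ℝ (Fin n)) :
    t ∈ l • Dset x₀ ↔
      ∀ i, if x₀ i ≠ 0 then t i = l * Real.sign (x₀ i) else |t i| ≤ l := by
  rw [Set.mem_smul_set]
  constructor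
  · rintro ⟨s, ⟨hs1, hs2⟩, rfl⟩
    intro i
    have hsi : (l • s) i = l * s i := rfl
    split_ifs with h
    · rw [hsi, hs2 i h]
    · rw [hsi, abs_mul, abs_of_nonneg hl]
      nlinarith [hs1 i, abs_nonneg (s i)]
  · intro ht
    classical
    refine ⟨WithLp.toLp 2 fun i => if x₀ i ≠ 0 then Real.sign (x₀ i) else
        (if l = 0 then 0 else t i / l), ⟨?_, ?_⟩, ?_⟩
    · intro i
      show |if x₀ i ≠ 0 then Real.sign (x₀ i) else (if l = 0 then 0 else t i / l)| ≤ 1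
      by_cases h : x₀ i ≠ 0
      · rw [if_pos h]; exact abs_sign_le _
      · rw [if_neg h]
        by_cases h0 : l = 0
        · rw [if_pos h0]; norm_num
        · rw [if_neg h0]
          have hti := ht i
          rw [if_neg h] at hti
          rw [abs_div, abs_of_nonneg hl, div_le_one (lt_of_le_of_ne hl (Ne.symm h0))]
          exact hti
    · intro i h
      show (if x₀ i ≠ 0 then Real.sign (x₀ i) else (if l = 0 then 0 else t i / l))
        = Real.sign (x₀ i)
      rw [if_pos h]
    · ext i
      show l * (if x₀ i ≠ 0 then Real.sign (x₀ i) else (if l = 0 then 0 else t i / l)) = t i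
      by_cases h : x₀ i ≠ 0
      · rw [if_pos h]
        have hti := ht i
        rw [if_pos h] at hti
        rw [hti]
      · rw [if_neg h]
        have hti := ht i
        rw [if_neg h] at hti
        by_cases h0 : l = 0
        · rw [if_pos h0]
          have h1 : |t i| ≤ 0 := h0 ▸ hti
          have ht0 : t i = 0 := abs_eq_zero.mp (le_antisymm h1 (abs_nonneg _))
          rw [ht0, h0]
          ring
        · rw [if_neg h0, mul_div_cancel₀ _ h0]

lemma infDist_sq_eq {x₀ : EuclideanSpace ℝ (Fin n)} {l : ℝ} (hl : 0 ≤ l)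
    (h : EuclideanSpace ℝ (Fin n)) :
    Metric.infDist h (l • Dset x₀) ^ 2
      = ∑ i, (if x₀ i ≠ 0 then (h i - l * Real.sign (x₀ i)) ^ 2
          else max (|h i| - l) 0 ^ 2) := by
  classical
  set g : Fin n → ℝ := fun i => if x₀ i ≠ 0 then (h i - l * Real.sign (x₀ i)) ^ 2
      else max (|h i| - l) 0 ^ 2 with hgdef
  have hg_nonneg : ∀ i, 0 ≤ g i := by
    intro i; simp only [hgdef]; split_ifs <;> positivity
  have hsum_nonneg : 0 ≤ ∑ i, g i := Finset.sum_nonneg fun i _ => hg_nonneg i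
  set p : EuclideanSpace ℝ (Fin n) := WithLp.toLp 2 fun i => if x₀ i ≠ 0 then l * Real.sign (x₀ i)
      else min (max (h i) (-l)) l with hpdef
  have hp : p ∈ l • Dset x₀ := by
    rw [mem_smul_D hl]
    intro i
    by_cases hx : x₀ i ≠ 0
    · rw [if_pos hx]
      show (if x₀ i ≠ 0 then l * Real.sign (x₀ i) else _) = _
      rw [if_pos hx]
    · rw [if_neg hx]
      show |(if x₀ i ≠ 0 then l * Real.sign (x₀ i) else min (max (h i) (-l)) l)| ≤ l
      rw [if_neg hx]
      exact clamp_abs_le hl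
  have hne : (l • Dset x₀).Nonempty := ⟨p, hp⟩
  have hdist_p : dist h p = Real.sqrt (∑ i, g i) := by
    rw [EuclideanSpace.dist_eq]
    congr 1
    refine Finset.sum_congr rfl fun i _ => ?_
    rw [Real.dist_eq, sq_abs]
    show (h i - p i) ^ 2 = g i
    simp only [hpdef, hgdef]
    by_cases hx : x₀ i ≠ 0
    · rw [if_pos hx, if_pos hx]
    · rw [if_neg hx, if_neg hx]
      exact clamp_sq hl
  have hlow : ∀ t ∈ l • Dset x₀, Real.sqrt (∑ i, g i) ≤ dist h t := by
    intro t ht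
    have hco := (mem_smul_D hl t).1 ht
    rw [EuclideanSpace.dist_eq]
    apply Real.sqrt_le_sqrt
    refine Finset.sum_le_sum fun i _ => ?_
    rw [Real.dist_eq, sq_abs]
    have hci := hco i
    simp only [hgdef]
    by_cases hx : x₀ i ≠ 0
    · rw [if_pos hx] at hci ⊢
      rw [hci]
    · rw [if_neg hx] at hci ⊢
      exact sq_clamp_le hci
  have heq : Metric.infDist h (l • Dset x₀) = Real.sqrt (∑ i, g i) := by
    refine le_antisymm ?_ ?_
    · rw [← hdist_p]
      exact Metric.infDist_le_dist_of_mem hp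
    · by_contra hlt
      push_neg at hlt
      obtain ⟨y, hy, hd⟩ := (Metric.infDist_lt_iff hne).1 hlt
      exact absurd hd (not_lt.2 (hlow y hy))
  rw [heq, Real.sq_sqrt hsum_nonneg]

/-! product measure -/

lemma pi_map_eval {ι : Type*} [Fintype ι] (ν : ι → Measure ℝ)
    [∀ i, IsProbabilityMeasure (ν i)] (i : ι) :
    (Measure.pi ν).map (fun f => f i) = ν i := by
  classical
  ext s hs
  rw [Measure.map_apply (measurable_pi_apply i) hs]
  have hpre : (fun f : ι → ℝ => f i) ⁻¹' s
      = Set.pi Set.univ (fun j => if j = i then s else Set.univ) := by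
    ext f
    simp only [Set.mem_preimage, Set.mem_pi, Set.mem_univ, true_implies]
    constructor
    · intro hf j
      split_ifs with hj
      · subst hj; exact hf
      · trivial
    · intro hf
      have := hf i
      simpa using this
  rw [hpre, Measure.pi_pi]
  rw [Finset.prod_eq_single i (fun j _ hj => by simp [hj]) (by simp)]
  simp

theorem gaussian_sq_dist_l1 {n : ℕ} (x₀ : EuclideanSpace ℝ (Fin n)) (l : ℝ) (hl : 0 ≤ l)
    (k : ℕ) (hk : k = (Finset.univ.filter fun i => x₀ i ≠ 0).card)
    (D : Set (EuclideanSpace ℝ (Fin n)))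
    (hD : D = {s | (∀ i, |s i| ≤ 1) ∧ ∀ i, x₀ i ≠ 0 → s i = Real.sign (x₀ i)})
    (μ : Measure (EuclideanSpace ℝ (Fin n)))
    (hμ : μ = (Measure.pi fun _ : Fin n => gaussianReal 0 1).map (MeasurableEquiv.toLp 2 (Fin n → ℝ))) :
    ∫ h, Metric.infDist h (l • D) ^ 2 ∂μ =
      k * (1 + l ^ 2) +
        (n - k) * ((1 + l ^ 2) * erfc (l / Real.sqrt 2) -
          Real.sqrt (2 / π) * l * exp (-l ^ 2 / 2)) := by
  subst hμ hD
  set B : ℝ := (1 + l ^ 2) * erfc (l / Real.sqrt 2) -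
      Real.sqrt (2 / π) * l * Real.exp (-l ^ 2 / 2) with hB
  set gi : Fin n → ℝ → ℝ := fun i x => if x₀ i ≠ 0 then (x - l * Real.sign (x₀ i)) ^ 2
      else max (|x| - l) 0 ^ 2 with hgi
  have hcont : ∀ i, Continuous (gi i) := by
    intro i
    simp only [hgi]
    by_cases hx : x₀ i ≠ 0
    · simp only [if_pos hx]; fun_prop
    · simp only [if_neg hx]; fun_prop
  have hInt : ∀ i, Integrable (gi i) (gaussianReal 0 1) := by
    intro i
    simp only [hgi]
    by_cases hx : x₀ i ≠ 0
    · simp only [if_pos hx]; exact GaussAux.integrable_sq_gauss _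
    · simp only [if_neg hx]; exact GaussAux.integrable_m_gauss hl
  have hVal : ∀ i, ∫ x, gi i x ∂(gaussianReal 0 1)
      = if x₀ i ≠ 0 then 1 + l ^ 2 else B := by
    intro i
    by_cases hx : x₀ i ≠ 0
    · simp only [hgi, if_pos hx]
      rw [GaussAux.gauss_sq, mul_pow, sign_sq_of_ne _ hx, mul_one]
    · simp only [hgi, if_neg hx]
      exact GaussAux.gauss_clamp hl
  have hmap : ∀ i : Fin n,
      (Measure.pi fun _ : Fin n => gaussianReal 0 1).map (fun f => f i)
        = gaussianReal 0 1 := fun i => pi_map_eval _ i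
  have hIntPi : ∀ i, Integrable (fun h : Fin n → ℝ => gi i (h i))
      (Measure.pi fun _ : Fin n => gaussianReal 0 1) := by
    intro i
    have h1 := hInt i
    rw [← hmap i] at h1
    exact (integrable_map_measure ((hcont i).aestronglyMeasurable)
      (measurable_pi_apply i).aemeasurable).1 h1
  have hint_eq : ∀ i, ∫ h : Fin n → ℝ, gi i (h i)
        ∂(Measure.pi fun _ : Fin n => gaussianReal 0 1)
      = ∫ x, gi i x ∂(gaussianReal 0 1) := by
    intro i
    conv_rhs => rw [← hmap i]
    rw [integral_map (measurable_pi_apply i).aemeasurable ((hcont i).aestronglyMeasurable)]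
  have hpt : ∀ h : Fin n → ℝ,
      Metric.infDist ((MeasurableEquiv.toLp 2 (Fin n → ℝ)) h) (l • {s : EuclideanSpace ℝ (Fin n) |
        (∀ i, |s i| ≤ 1) ∧ ∀ i, x₀ i ≠ 0 → s i = Real.sign (x₀ i)}) ^ 2
      = ∑ i, gi i (h i) := fun h => infDist_sq_eq hl _
  rw [integral_map_equiv, integral_congr_ae (Filter.Eventually.of_forall hpt)]
  rw [integral_finset_sum Finset.univ (fun i _ => hIntPi i)]
  have hsum : ∀ i ∈ Finset.univ, (∫ h : Fin n → ℝ, gi i (h i)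
        ∂(Measure.pi fun _ : Fin n => gaussianReal 0 1))
      = if x₀ i ≠ 0 then 1 + l ^ 2 else B := fun i _ => (hint_eq i).trans (hVal i)
  rw [Finset.sum_congr rfl hsum, Finset.sum_ite, Finset.sum_const, Finset.sum_const,
    nsmul_eq_mul, nsmul_eq_mul]
  have hcard := Finset.card_filter_add_card_filter_not
    (s := (Finset.univ : Finset (Fin n))) (p := fun i => x₀ i ≠ 0)
  rw [Finset.card_univ, Fintype.card_fin] at hcard
  have hkn : k ≤ n := by omega
  have hcard2 : (Finset.univ.filter fun i => ¬ x₀ i ≠ 0).card = n - k := by omega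
  rw [hcard2, ← hk]
  rw [Nat.cast_sub hkn]
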